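/- Let M₀, M₁ be 2×2 complex positive semidefinite matrices with M₀ + M₁ = 𝟙, and let A be a 2×2 Hermitian matrix with tr A = 0. Then λ_max(√M₀·A·√M₀) + λ_max(√M₁·A·√M₁) ≤ ‖A‖, where λ_max denotes the largest eigenvalue of a Hermitian matrix and ‖A‖ is the operator norm of A (equal to |a⃗| when A = a⃗·σ⃗). -/

import Mathlib

open Matrix ComplexOrder

noncomputable section

/-- The positive semidefinite square root of a positive semidefinite matrix
(the definition `Matrix.PosSemidef.sqrt` of the older Mathlib, since removed). -/
def Matrix.PosSemidef.sqrt {n 𝕜 : Type*} [Fintype n] [DecidableEq n] [RCLike 𝕜]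
    {A : Matrix n n 𝕜} (hA : A.PosSemidef) : Matrix n n 𝕜 :=
  hA.1.eigenvectorUnitary.1 * diagonal ((↑) ∘ (√·) ∘ hA.1.eigenvalues) *
    (star hA.1.eigenvectorUnitary : Matrix n n 𝕜)

lemma Matrix.PosSemidef.sqrt_isHermitian {n 𝕜 : Type*} [Fintype n] [DecidableEq n] [RCLike 𝕜]
    {A : Matrix n n 𝕜} (hA : A.PosSemidef) : hA.sqrt.conjTranspose = hA.sqrt := by
  simp [Matrix.PosSemidef.sqrt, conjTranspose_mul, diagonal_conjTranspose, mul_assoc]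
  congr 2
  · rw [← star_eq_conjTranspose, star_star]
  · congr 1
    funext i
    simp only [Pi.star_apply, Function.comp_apply, RCLike.star_def, RCLike.conj_ofReal]

lemma Matrix.PosSemidef.sqrt_mul_self {n 𝕜 : Type*} [Fintype n] [DecidableEq n] [RCLike 𝕜]
    {A : Matrix n n 𝕜} (hA : A.PosSemidef) : hA.sqrt * hA.sqrt = A := by
  have hU : (star hA.1.eigenvectorUnitary : Matrix n n 𝕜) * hA.1.eigenvectorUnitary = 1 :=
    Unitary.coe_star_mul_self _
  conv_rhs => rw [hA.1.spectral_theorem, Unitary.conjStarAlgAut_apply]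
  simp only [Matrix.PosSemidef.sqrt, mul_assoc]
  rw [← mul_assoc (star hA.1.eigenvectorUnitary : Matrix n n 𝕜), hU, one_mul,
    ← mul_assoc (diagonal _), diagonal_mul_diagonal]
  congr 3
  funext i
  simp only [Function.comp_apply]
  rw [← RCLike.ofReal_mul, Real.mul_self_sqrt (hA.eigenvalues_nonneg i)]


lemma dp_cauchy {n : Type*} [Fintype n] (x y : n → ℂ) :
    Complex.normSq (star x ⬝ᵥ y) ≤ (star x ⬝ᵥ x).re * (star y ⬝ᵥ y).re := by
  have h := norm_inner_le_norm (𝕜 := ℂ) ((WithLp.equiv 2 (n → ℂ)).symm x)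
    ((WithLp.equiv 2 (n → ℂ)).symm y)
  rw [EuclideanSpace.inner_toLp_toLp, dotProduct_comm] at h
  have hx : (star x ⬝ᵥ x).re = ‖(WithLp.equiv 2 (n → ℂ)).symm x‖ ^ 2 := by
    rw [dotProduct_comm, ← EuclideanSpace.inner_toLp_toLp, inner_self_eq_norm_sq_to_K]
    norm_cast
  have hy : (star y ⬝ᵥ y).re = ‖(WithLp.equiv 2 (n → ℂ)).symm y‖ ^ 2 := by
    rw [dotProduct_comm, ← EuclideanSpace.inner_toLp_toLp, inner_self_eq_norm_sq_to_K]
    norm_cast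
  rw [hx, hy, ← Complex.sq_norm]
  calc ‖star x ⬝ᵥ y‖ ^ 2 ≤ (‖(WithLp.equiv 2 (n → ℂ)).symm x‖ * ‖(WithLp.equiv 2 (n → ℂ)).symm y‖) ^ 2 := by
        apply pow_le_pow_left₀ (norm_nonneg _) h
    _ = _ := by ring

lemma vecMulVec_mulVec' {n : Type*} [Fintype n] (w v x : n → ℂ) :
    (vecMulVec w v) *ᵥ x = (v ⬝ᵥ x) • w := by
  funext i
  simp [vecMulVec_apply, mulVec, dotProduct, Finset.sum_mul, Finset.mul_sum, mul_assoc,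
    mul_comm, mul_left_comm]

lemma star_dotProduct'' {n : Type*} [Fintype n] (x y : n → ℂ) :
    star x ⬝ᵥ y = star (star y ⬝ᵥ x) := by
  simp [dotProduct, mul_comm]

/-- For a binary qubit POVM `(M₀, M₁)` and a traceless Hermitian `A`, the sum
of the largest eigenvalues of `√M_b·A·√M_b` is at most the operator norm of
`A`. -/
theorem povm_eigenvalue_sum_bound
    (M0 M1 A : Matrix (Fin 2) (Fin 2) ℂ)
    (hM0 : M0.PosSemidef) (hM1 : M1.PosSemidef) (hsum : M0 + M1 = 1)
    (hA : A.IsHermitian) (htrA : A.trace = 0)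
    (h0 : (hM0.sqrt * A * hM0.sqrt).IsHermitian)
    (h1 : (hM1.sqrt * A * hM1.sqrt).IsHermitian) :
    (⨆ i, h0.eigenvalues i) + (⨆ i, h1.eigenvalues i) ≤
      ‖Matrix.toEuclideanCLM (𝕜 := ℂ) A‖ := by
  have htr : hA.eigenvalues 0 + hA.eigenvalues 1 = 0 := by
    have h : A.trace = ∑ i, (hA.eigenvalues i : ℂ) := by
      conv_lhs => rw [hA.spectral_theorem]
      rw [Unitary.conjStarAlgAut_apply, trace_mul_cycle]
      simp [Matrix.trace_diagonal]
    rw [htrA] at h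
    have h2 := h.symm
    rw [Fin.sum_univ_two] at h2
    exact_mod_cast congrArg Complex.re h2
  obtain ⟨k, hk⟩ := Finite.exists_max hA.eigenvalues
  set a : ℝ := hA.eigenvalues k with ha_def
  have ha : 0 ≤ a := by
    have h0' := hk 0; have h1' := hk 1; fin_cases k <;> simp only [ha_def] at * <;> linarith
  set u : Fin 2 → ℂ := ⇑(hA.eigenvectorBasis k) with hu_def
  have honb := hA.eigenvectorBasis.orthonormal
  have hdot : ∀ j, star u ⬝ᵥ ⇑(hA.eigenvectorBasis j) = if k = j then 1 else 0 := by
    intro j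
    have := orthonormal_iff_ite.mp honb k j
    rw [EuclideanSpace.inner_eq_star_dotProduct, dotProduct_comm] at this
    exact this
  have huu : star u ⬝ᵥ u = 1 := by simpa using hdot k
  have hother : ∀ j, j ≠ k → hA.eigenvalues j = -a := by
    intro j hj
    fin_cases j <;> fin_cases k <;> simp_all <;> linarith
  -- structure identity
  have hAeq : A = (2 * (a : ℂ)) • vecMulVec u (star u) - (a : ℂ) • 1 := by
    apply (Matrix.toEuclideanLin (𝕜 := ℂ)).injective
    apply Module.Basis.ext hA.eigenvectorBasis.toBasis
    intro j
    rw [OrthonormalBasis.coe_toBasis]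
    apply (WithLp.equiv 2 (Fin 2 → ℂ)).injective
    simp only [WithLp.equiv_apply, ofLp_toEuclideanLin_apply]
    show A *ᵥ ⇑(hA.eigenvectorBasis j) =
      ((2 * (a : ℂ)) • vecMulVec u (star u) - (a : ℂ) • 1) *ᵥ ⇑(hA.eigenvectorBasis j)
    rw [hA.mulVec_eigenvectorBasis, sub_mulVec, smul_mulVec, smul_mulVec,
      vecMulVec_mulVec', one_mulVec, hdot j]
    by_cases hj : k = j
    · subst hj
      rw [if_pos rfl, ← ha_def]
      simp only [one_smul]
      match_scalars <;> push_cast <;> ring_nf <;> rfl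
    · rw [if_neg hj, hother j (Ne.symm hj)]
      match_scalars <;> push_cast <;> ring_nf <;> rfl
  -- key per-measurement bound
  have key : ∀ (M : Matrix (Fin 2) (Fin 2) ℂ) (hM : M.PosSemidef)
      (h : (hM.sqrt * A * hM.sqrt).IsHermitian) (i : Fin 2),
      h.eigenvalues i ≤ a * (star u ⬝ᵥ (M *ᵥ u)).re := by
    intro M hM h i
    have hSH : hM.sqrt.conjTranspose = hM.sqrt := hM.sqrt_isHermitian
    set S := hM.sqrt with hS_def
    set v : Fin 2 → ℂ := ⇑(h.eigenvectorBasis i) with hv_def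
    set y : Fin 2 → ℂ := S *ᵥ v with hy_def
    have hvv : star v ⬝ᵥ v = 1 := by
      have h2 := orthonormal_iff_ite.mp h.eigenvectorBasis.orthonormal i i
      rw [EuclideanSpace.inner_eq_star_dotProduct, dotProduct_comm] at h2
      simpa using h2
    have e1 : h.eigenvalues i = ((star v) ⬝ᵥ ((S * A * S) *ᵥ v)).re := by
      have h3 := h.eigenvalues_eq i
      simpa using h3
    have hsty : star v ᵥ* S = star y := by rw [hy_def, star_mulVec, hSH]
    have e2 : (star v) ⬝ᵥ ((S * A * S) *ᵥ v) = (star y) ⬝ᵥ (A *ᵥ y) := by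
      rw [← mulVec_mulVec, ← mulVec_mulVec, dotProduct_mulVec, hsty, hy_def]
    set c : ℂ := star u ⬝ᵥ y with hc_def
    have e3 : (star y) ⬝ᵥ (A *ᵥ y) = 2*(a:ℂ)*(c * star c) - (a:ℂ) * (star y ⬝ᵥ y) := by
      conv_lhs => rw [hAeq]
      rw [sub_mulVec, smul_mulVec, smul_mulVec, vecMulVec_mulVec', one_mulVec,
        dotProduct_sub]
      simp only [dotProduct_smul, smul_eq_mul, star_dotProduct'' y u, ← hc_def]
    have hccs : c * star c = (Complex.normSq c : ℂ) := by
      rw [Complex.star_def, Complex.mul_conj]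
    have ere : h.eigenvalues i = 2*a*Complex.normSq c - a*(star y ⬝ᵥ y).re := by
      rw [e1, e2, e3, hccs]
      simp [Complex.re_ofReal_mul]
    have cs1 : Complex.normSq c ≤ (star y ⬝ᵥ y).re := by
      have h4 := dp_cauchy u y
      rw [huu] at h4
      simpa only [← hc_def, Complex.one_re, one_mul] using h4
    have hstarSu : star (S *ᵥ u) = star u ᵥ* S := by rw [star_mulVec, hSH]
    have hc2 : c = star (S *ᵥ u) ⬝ᵥ v := by
      rw [hc_def, hy_def, dotProduct_mulVec, hstarSu]
    have cs2 : Complex.normSq c ≤ (star u ⬝ᵥ (M *ᵥ u)).re := by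
      have hcs := dp_cauchy (S *ᵥ u) v
      rw [hvv] at hcs
      have hSu : star (S *ᵥ u) ⬝ᵥ (S *ᵥ u) = star u ⬝ᵥ (M *ᵥ u) := by
        rw [hstarSu, ← dotProduct_mulVec, mulVec_mulVec, hM.sqrt_mul_self]
      rw [hSu, ← hc2] at hcs
      simpa only [Complex.one_re, mul_one] using hcs
    rw [ere]
    nlinarith [cs1, cs2, ha, Complex.normSq_nonneg c]
  have hsum0 : (star u ⬝ᵥ (M0 *ᵥ u)).re + (star u ⬝ᵥ (M1 *ᵥ u)).re = 1 := by
    have : star u ⬝ᵥ (M0 *ᵥ u) + star u ⬝ᵥ (M1 *ᵥ u) = 1 := by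
      rw [← dotProduct_add, ← add_mulVec, hsum, one_mulVec, huu]
    calc (star u ⬝ᵥ (M0 *ᵥ u)).re + (star u ⬝ᵥ (M1 *ᵥ u)).re
        = (star u ⬝ᵥ (M0 *ᵥ u) + star u ⬝ᵥ (M1 *ᵥ u)).re := by simp
      _ = 1 := by rw [this]; simp
  have hbound : (⨆ i, h0.eigenvalues i) + (⨆ i, h1.eigenvalues i) ≤ a := by
    have b0 : (⨆ i, h0.eigenvalues i) ≤ a * (star u ⬝ᵥ (M0 *ᵥ u)).re :=
      ciSup_le (key M0 hM0 h0)
    have b1 : (⨆ i, h1.eigenvalues i) ≤ a * (star u ⬝ᵥ (M1 *ᵥ u)).re :=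
      ciSup_le (key M1 hM1 h1)
    have hadd := add_le_add b0 b1
    rwa [← mul_add, hsum0, mul_one] at hadd
  refine hbound.trans ?_
  -- a ≤ ‖toEuclideanCLM A‖
  have hnorm1 : ‖hA.eigenvectorBasis k‖ = 1 := honb.1 k
  have happ : toEuclideanCLM (𝕜 := ℂ) A (hA.eigenvectorBasis k)
      = (a : ℂ) • hA.eigenvectorBasis k := by
    apply (WithLp.equiv 2 (Fin 2 → ℂ)).injective
    simp only [WithLp.equiv_apply, ofLp_toEuclideanCLM]
    show A *ᵥ u = _
    rw [hA.mulVec_eigenvectorBasis, ← ha_def]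
    simp [WithLp.ofLp_smul]
  have := (toEuclideanCLM (𝕜 := ℂ) A).le_opNorm (hA.eigenvectorBasis k)
  rw [happ, norm_smul, hnorm1] at this
  simp only [mul_one] at this
  calc a ≤ |a| := le_abs_self a
    _ = ‖(a : ℂ)‖ := by simp
    _ ≤ _ := this

end
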